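/- Let λ : (0,∞) → (0,1/4) be the inverse of θ(λ) = -1 + Artanh(√(1-4λ))/√(1-4λ). Then λ is differentiable and satisfies λ'(θ) = -2λ(1-4λ)/(1-4(θ+1)λ) for all θ > 0. -/

import Mathlib

open Real Filter Set

noncomputable def artanh (x : ℝ) : ℝ := (1/2) * Real.log ((1+x)/(1-x))

lemma artanh_hasDerivAt {x : ℝ} (hx : x ∈ Set.Ioo (-1:ℝ) 1) :
    HasDerivAt _root_.artanh (1/(1-x^2)) x := by
  obtain ⟨hx1, hx2⟩ := hx
  have h1 : (0:ℝ) < 1 + x := by linarith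
  have h2 : (0:ℝ) < 1 - x := by linarith
  have d1 : HasDerivAt (fun y : ℝ => Real.log (1+y)) (1/(1+x)) x := by
    have := (Real.hasDerivAt_log h1.ne').comp x ((hasDerivAt_id x).const_add 1)
    simpa [one_div, Function.comp_def] using this
  have d2 : HasDerivAt (fun y : ℝ => Real.log (1-y)) (-(1/(1-x))) x := by
    have := (Real.hasDerivAt_log h2.ne').comp x ((hasDerivAt_id x).neg.const_add 1)
    simpa [one_div, Function.comp_def] using this
  have d3 : HasDerivAt (fun y : ℝ => (1/2) * (Real.log (1+y) - Real.log (1-y)))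
      ((1/2) * (1/(1+x) - -(1/(1-x)))) x := (d1.sub d2).const_mul _
  have heq : (fun y : ℝ => (1/2) * (Real.log (1+y) - Real.log (1-y))) =ᶠ[nhds x] _root_.artanh := by
    have hs : Set.Ioo (-1:ℝ) 1 ∈ nhds x := isOpen_Ioo.mem_nhds ⟨hx1, hx2⟩
    filter_upwards [hs] with y hy
    have hy1 : (0:ℝ) < 1 + y := by linarith [hy.1]
    have hy2 : (0:ℝ) < 1 - y := by linarith [hy.2]
    unfold _root_.artanh
    rw [Real.log_div hy1.ne' hy2.ne']
  have : HasDerivAt _root_.artanh ((1/2) * (1/(1+x) - -(1/(1-x)))) x := d3.congr_of_eventuallyEq heq.symm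
  convert this using 1
  have h3 : (1:ℝ) - x^2 ≠ 0 := by nlinarith
  field_simp
  ring

lemma artanh_zero : _root_.artanh 0 = 0 := by simp [_root_.artanh]

lemma lt_artanh {u : ℝ} (hu : u ∈ Set.Ioo (0:ℝ) 1) : u < _root_.artanh u := by
  obtain ⟨hu0, hu1⟩ := hu
  set g : ℝ → ℝ := fun t => _root_.artanh t - t with hg
  have key : StrictMonoOn g (Set.Icc 0 u) := by
    apply strictMonoOn_of_deriv_pos (convex_Icc 0 u)
    · intro x hx
      have hx' : x ∈ Set.Ioo (-1:ℝ) 1 := ⟨by linarith [hx.1], by linarith [hx.2]⟩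
      exact ((artanh_hasDerivAt hx').sub (hasDerivAt_id x)).continuousAt.continuousWithinAt
    · intro x hx
      rw [interior_Icc] at hx
      have hx' : x ∈ Set.Ioo (-1:ℝ) 1 := ⟨by linarith [hx.1], by linarith [hx.2]⟩
      have hd : HasDerivAt g (1/(1-x^2) - 1) x := (artanh_hasDerivAt hx').sub (hasDerivAt_id x)
      rw [hd.deriv]
      have h1 : (0:ℝ) < 1 - x^2 := by nlinarith [hx.1, hx.2]
      have h2 : 1 - x^2 < 1 := by nlinarith [hx.1, hx.2]
      rw [sub_pos, lt_div_iff₀ h1]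
      linarith
  have := key (Set.left_mem_Icc.2 hu0.le) (Set.right_mem_Icc.2 hu0.le) hu0
  simp only [hg, _root_.artanh_zero] at this
  linarith

lemma artanh_lt {u : ℝ} (hu : u ∈ Set.Ioo (0:ℝ) 1) : (1 - u^2) * _root_.artanh u < u := by
  obtain ⟨hu0, hu1⟩ := hu
  set g : ℝ → ℝ := fun t => t/(1-t^2) - _root_.artanh t with hg
  have key : StrictMonoOn g (Set.Icc 0 u) := by
    apply strictMonoOn_of_deriv_pos (convex_Icc 0 u)
    · intro x hx
      have hx' : x ∈ Set.Ioo (-1:ℝ) 1 := ⟨by linarith [hx.1], by linarith [hx.2]⟩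
      have h1 : (0:ℝ) < 1 - x^2 := by nlinarith [hx.1, hx.2]
      have hd : HasDerivAt (fun t => t/(1-t^2)) ((1*(1-x^2) - x*(-(2*x)))/(1-x^2)^2) x := by
        apply (hasDerivAt_id x).div _ h1.ne'
        simpa using ((hasDerivAt_pow 2 x).const_sub 1)
      exact (hd.sub (artanh_hasDerivAt hx')).continuousAt.continuousWithinAt
    · intro x hx
      rw [interior_Icc] at hx
      have hx' : x ∈ Set.Ioo (-1:ℝ) 1 := ⟨by linarith [hx.1], by linarith [hx.2]⟩
      have h1 : (0:ℝ) < 1 - x^2 := by nlinarith [hx.1, hx.2]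
      have hd : HasDerivAt (fun t => t/(1-t^2)) ((1*(1-x^2) - x*(-(2*x)))/(1-x^2)^2) x := by
        apply (hasDerivAt_id x).div _ h1.ne'
        simpa using ((hasDerivAt_pow 2 x).const_sub 1)
      have hd2 : HasDerivAt g ((1*(1-x^2) - x*(-(2*x)))/(1-x^2)^2 - 1/(1-x^2)) x :=
        hd.sub (artanh_hasDerivAt hx')
      rw [hd2.deriv]
      have : (1*(1-x^2) - x*(-(2*x)))/(1-x^2)^2 - 1/(1-x^2) = 2*x^2/(1-x^2)^2 := by
        field_simp
        ring
      rw [this]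
      have hx0 : 0 < x := hx.1
      positivity
  have := key (Set.left_mem_Icc.2 hu0.le) (Set.right_mem_Icc.2 hu0.le) hu0
  simp only [hg, _root_.artanh_zero] at this
  have h1 : (0:ℝ) < 1 - u^2 := by nlinarith
  have h2 : _root_.artanh u < u/(1-u^2) := by simpa using this
  calc (1-u^2) * _root_.artanh u < (1-u^2) * (u/(1-u^2)) := by
        exact mul_lt_mul_of_pos_left h2 h1
    _ = u := by field_simp

noncomputable def thetaF (l : ℝ) : ℝ := -1 + _root_.artanh (Real.sqrt (1-4*l)) / Real.sqrt (1-4*l)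

noncomputable def Dl (l : ℝ) : ℝ :=
  ((1/(1-(Real.sqrt (1-4*l))^2) * Real.sqrt (1-4*l) - _root_.artanh (Real.sqrt (1-4*l)) * 1)
    / (Real.sqrt (1-4*l))^2) * (-2 / Real.sqrt (1-4*l))

lemma sqrt_facts {l : ℝ} (hl : l ∈ Set.Ioo (0:ℝ) (1/4)) :
    0 < Real.sqrt (1-4*l) ∧ Real.sqrt (1-4*l) < 1 ∧ (Real.sqrt (1-4*l))^2 = 1-4*l := by
  have h1 : (0:ℝ) < 1 - 4*l := by linarith [hl.2]
  have h2 : 1 - 4*l < 1 := by linarith [hl.1]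
  refine ⟨Real.sqrt_pos.2 h1, ?_, Real.sq_sqrt h1.le⟩
  nlinarith [Real.sq_sqrt h1.le, Real.sqrt_nonneg (1-4*l)]

lemma thetaF_hasDerivAt {l : ℝ} (hl : l ∈ Set.Ioo (0:ℝ) (1/4)) :
    HasDerivAt thetaF (Dl l) l ∧ Dl l < 0 := by
  obtain ⟨hu0, hu1, hsq⟩ := sqrt_facts hl
  set u := Real.sqrt (1-4*l) with hu
  have h1 : (0:ℝ) < 1 - 4*l := by linarith [hl.2]
  have hinner : HasDerivAt (fun x : ℝ => 1 - 4*x) (-4) l := by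
    simpa using ((hasDerivAt_id l).const_mul (4:ℝ)).const_sub 1
  have hsqrt : HasDerivAt (fun x : ℝ => Real.sqrt (1-4*x)) (1/(2*u) * (-4)) l :=
    (Real.hasDerivAt_sqrt h1.ne').comp l hinner
  have houter : HasDerivAt (fun v : ℝ => _root_.artanh v / v)
      ((1/(1-u^2) * u - _root_.artanh u * 1)/u^2) u :=
    (artanh_hasDerivAt ⟨by linarith, hu1⟩).div (hasDerivAt_id u) hu0.ne'
  have hcomp := houter.comp l hsqrt
  have hth : HasDerivAt thetaF ((1/(1-u^2) * u - _root_.artanh u * 1)/u^2 * (1/(2*u)*(-4))) l := by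
    unfold thetaF
    exact hcomp.const_add (-1)
  have heq : (1/(1-u^2) * u - _root_.artanh u * 1)/u^2 * (1/(2*u)*(-4)) = Dl l := by
    unfold Dl
    rw [← hu]
    field_simp
    ring
  constructor
  · rw [← heq]; exact hth
  · have hup : 1 - u^2 = 4*l := by rw [hsq]; ring
    have hA : (1-u^2) * _root_.artanh u < u := artanh_lt ⟨hu0, hu1⟩
    have hpos : 0 < 1/(1-u^2) * u - _root_.artanh u * 1 := by
      have h2 : 0 < 1 - u^2 := by rw [hup]; linarith [hl.1]
      rw [mul_one, sub_pos, one_div, ← div_eq_inv_mul, lt_div_iff₀ h2, mul_comm]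
      exact hA
    unfold Dl
    rw [← hu]
    apply mul_neg_of_pos_of_neg
    · positivity
    · apply div_neg_of_neg_of_pos <;> [norm_num; exact hu0]

lemma thetaF_pos {l : ℝ} (hl : l ∈ Set.Ioo (0:ℝ) (1/4)) : 0 < thetaF l := by
  obtain ⟨hu0, hu1, hsq⟩ := sqrt_facts hl
  have := lt_artanh ⟨hu0, hu1⟩
  unfold thetaF
  have : 1 < _root_.artanh (Real.sqrt (1-4*l)) / Real.sqrt (1-4*l) := by
    rw [lt_div_iff₀ hu0, one_mul]; exact this
  linarith

theorem stmt7 (lam : ℝ → ℝ)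
    (hmem : ∀ θ > (0:ℝ), lam θ ∈ Set.Ioo (0:ℝ) (1/4))
    (hinv : ∀ θ > (0:ℝ), thetaF (lam θ) = θ) :
    ∀ θ > (0:ℝ),
      HasDerivAt lam (-(2 * lam θ * (1 - 4 * lam θ)) / (1 - 4*(θ+1)*lam θ)) θ := by
  have hth_anti : StrictAntiOn thetaF (Set.Ioo (0:ℝ) (1/4)) := by
    apply strictAntiOn_of_deriv_neg (convex_Ioo _ _)
    · intro x hx; exact (thetaF_hasDerivAt hx).1.continuousAt.continuousWithinAt
    · intro x hx; rw [interior_Ioo] at hx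
      rw [(thetaF_hasDerivAt hx).1.deriv]; exact (thetaF_hasDerivAt hx).2
  have hsurj : ∀ l ∈ Set.Ioo (0:ℝ) (1/4), lam (thetaF l) = l := by
    intro l hl
    have hθ := thetaF_pos hl
    exact hth_anti.injOn (hmem _ hθ) hl (by rw [hinv _ hθ])
  have himg : lam '' (Set.Ioi 0) = Set.Ioo (0:ℝ) (1/4) := by
    apply Set.Subset.antisymm
    · rintro _ ⟨θ, hθ, rfl⟩; exact hmem θ hθ
    · intro l hl; exact ⟨thetaF l, thetaF_pos hl, hsurj l hl⟩
  have hanti : ∀ a b : ℝ, 0 < a → a < b → lam b < lam a := by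
    intro a b ha hab
    rcases lt_trichotomy (lam b) (lam a) with h|h|h
    · exact h
    · exfalso; have h1 := hinv a ha; rw [← h, hinv b (by linarith)] at h1; linarith
    · exfalso
      have h1 := hth_anti (hmem a ha) (hmem b (by linarith)) h
      rw [hinv a ha, hinv b (by linarith)] at h1; linarith
  intro θ hθ
  have hcont : ContinuousAt lam θ := by
    have hm : StrictMonoOn (fun t => lam (-t)) (Set.Iio (0:ℝ)) := by
      intro a ha b hb hab
      exact hanti (-b) (-a) (by simpa using hb) (by linarith)
    have h1 : ContinuousAt (fun t => lam (-t)) (-θ) := by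
      apply hm.continuousAt_of_image_mem_nhds (Iio_mem_nhds (by linarith))
      have himg2 : (fun t => lam (-t)) '' (Set.Iio 0) = Set.Ioo (0:ℝ) (1/4) := by
        rw [← himg]; ext y; constructor
        · rintro ⟨t, ht, rfl⟩; exact ⟨-t, by simpa using ht, rfl⟩
        · rintro ⟨t, ht, rfl⟩; exact ⟨-t, by simpa using ht, by simp⟩
      rw [himg2]
      exact isOpen_Ioo.mem_nhds (by simpa using hmem θ hθ)
    have h2 := h1.comp (continuous_neg.continuousAt (x := θ))
    have h3 : ((fun t => lam (-t)) ∘ Neg.neg) = lam := by funext t; simp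
    rw [← h3]; exact h2
  have hlmem := hmem θ hθ
  have hD := thetaF_hasDerivAt hlmem
  have hev : ∀ᶠ y in nhds θ, thetaF (lam y) = y := by
    filter_upwards [Ioi_mem_nhds hθ] with y hy using hinv y hy
  have hmain : HasDerivAt lam (Dl (lam θ))⁻¹ θ := HasDerivAt.of_local_left_inverse hcont hD.1 (ne_of_lt hD.2) hev
  convert hmain using 1
  -- value equality
  obtain ⟨hu0, hu1, hsq⟩ := sqrt_facts hlmem
  set l := lam θ with hldef
  unfold Dl
  set u := Real.sqrt (1-4*l) with hu
  set A := _root_.artanh u with hAdef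
  have h4l : 1 - u^2 = 4*l := by rw [hsq]; ring
  have hAlt : (1-u^2)*A < u := artanh_lt ⟨hu0, hu1⟩
  have hl0 : 0 < l := hlmem.1
  have hpos : 0 < u - 4*l*A := by nlinarith
  have hth1 : θ + 1 = A/u := by
    have h1 := hinv θ hθ
    unfold thetaF at h1
    rw [← hu, ← hAdef] at h1
    linarith
  have hden : 1 - 4*(θ+1)*l ≠ 0 := by
    rw [hth1]
    have : 1 - 4*(A/u)*l = (u - 4*l*A)/u := by field_simp
    rw [this]
    positivity
  rw [h4l, hth1, ← hsq]
  have hd2 : (1/(4*l)*u - A*1)/u^2 * (-2/u) ≠ 0 := by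
    have : (1/(4*l)*u - A*1)/u^2 * (-2/u) = -(u - 4*l*A)/(2*l*u^3) := by
      field_simp; ring
    rw [this]
    apply div_ne_zero (by linarith) (by positivity)
  have hnum : 1/(4*l)*u - A*1 ≠ 0 := by
    rw [mul_one, sub_ne_zero]
    intro h
    rw [← h] at hpos
    have : u - 4*l*(1/(4*l)*u) = 0 := by field_simp; ring
    linarith
  have hden' : 1 - 4*(A/u)*l ≠ 0 := by rw [hth1] at hden; exact hden
  rw [inv_eq_one_div, div_eq_div_iff hden' hd2]
  field_simp
  ring
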